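/- The single layer potential of the equilibrium distribution of the unit disk in ℝ³ is constant on the disk: for every point x in the open unit disk 𝔻₁ ⊂ ℝ² × {0} ⊂ ℝ³, ∫_{𝔻₁} (1/(4π|x−z|)) · (4/(π√(1−|z|²))) dz = 1. -/

import Mathlib

open MeasureTheory Metric Real
open scoped Topology

/-- The embedding of the plane `ℝ² ≃ {x₃ = 0} ⊂ ℝ³`. -/
noncomputable def planeEmb (z : EuclideanSpace ℝ (Fin 2)) : EuclideanSpace ℝ (Fin 3) :=
  WithLp.toLp 2 ![z 0, z 1, 0]

section Aux

open intervalIntegral Set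


lemma intervalIntegrable_inv_sqrt_sq_sub_sq {R a : ℝ} (hR : 0 < R) (ha : -R < a) (haR : a ≤ R) :
    IntervalIntegrable (fun s => (Real.sqrt (R^2 - s^2))⁻¹) volume a R := by
  have hRa : (0:ℝ) < R + a := by linarith
  have hg : IntervalIntegrable (fun s => (Real.sqrt (R + a))⁻¹ * ((R - s) ^ (-(1/2) : ℝ))) volume a R := by
    have h0 : IntervalIntegrable (fun x : ℝ => x ^ (-(1/2) : ℝ)) volume (R - R) (R - a) :=
      intervalIntegrable_rpow' (by norm_num)
    simpa using ((h0.comp_sub_left R).const_mul _).symm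
  refine hg.mono_fun ?_ ?_
  · exact (((continuous_const.sub (continuous_pow 2)).sqrt.measurable).inv).aestronglyMeasurable
  · rw [uIoc_of_le haR]
    refine (ae_restrict_iff' measurableSet_Ioc).2 (Filter.Eventually.of_forall fun s hs => ?_)
    have hs1 : a < s := hs.1
    have hs2 : s ≤ R := hs.2
    have hRs : (0:ℝ) ≤ R - s := by linarith
    have key : (Real.sqrt (R^2 - s^2))⁻¹ ≤ (Real.sqrt (R + a))⁻¹ * ((R - s) ^ (-(1/2) : ℝ)) := by
      have h1 : (R - s) ^ (-(1/2) : ℝ) = (Real.sqrt (R - s))⁻¹ := by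
        rw [Real.rpow_neg hRs, Real.sqrt_eq_rpow]
      rw [h1, ← mul_inv]
      have h2 : Real.sqrt (R^2 - s^2) = Real.sqrt (R + s) * Real.sqrt (R - s) := by
        rw [← Real.sqrt_mul (by linarith : (0:ℝ) ≤ R + s)]
        ring_nf
      rw [h2]
      rcases eq_or_lt_of_le hs2 with h | h
      · simp [← h]
      · apply inv_anti₀
        · exact mul_pos (Real.sqrt_pos.2 hRa) (Real.sqrt_pos.2 (by linarith))
        · have := Real.sqrt_le_sqrt (by linarith : R + a ≤ R + s)
          exact mul_le_mul_of_nonneg_right this (Real.sqrt_nonneg _)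
    calc ‖(Real.sqrt (R^2 - s^2))⁻¹‖ = (Real.sqrt (R^2 - s^2))⁻¹ := by
          rw [Real.norm_eq_abs, abs_of_nonneg]; positivity
      _ ≤ (Real.sqrt (R + a))⁻¹ * ((R - s) ^ (-(1/2) : ℝ)) := key
      _ ≤ ‖(Real.sqrt (R + a))⁻¹ * ((R - s) ^ (-(1/2) : ℝ))‖ := le_abs_self _

lemma integral_inv_sqrt_sq_sub_sq {R a : ℝ} (hR : 0 < R) (ha : -R < a) (haR : a < R) :
    ∫ s in a..R, (Real.sqrt (R^2 - s^2))⁻¹ = π/2 - Real.arcsin (a/R) := by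
  have hcont : Continuous (fun s : ℝ => Real.arcsin (s / R)) :=
    Real.continuous_arcsin.comp (continuous_id.div_const R)
  have hderiv : ∀ s ∈ Ioo a R, HasDerivAt (fun s : ℝ => Real.arcsin (s / R))
      ((Real.sqrt (R^2 - s^2))⁻¹) s := by
    intro s hs
    have hs1 : -R < s := lt_trans ha hs.1
    have hs2 : s < R := hs.2
    have hne1 : s / R ≠ -1 := by
      intro h; rw [div_eq_iff hR.ne'] at h; simp at h; linarith
    have hne2 : s / R ≠ 1 := by
      intro h; rw [div_eq_iff hR.ne'] at h; simp at h; linarith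
    have H1 : HasDerivAt (fun s : ℝ => s / R) (1 / R) s := by
      simpa using (hasDerivAt_id s).div_const R
    have H2 := (Real.hasDerivAt_arcsin hne1 hne2).comp s H1
    refine H2.congr_deriv ?_
    have e1 : 1 - (s/R)^2 = (R^2 - s^2)/R^2 := by field_simp
    have hpos : (0:ℝ) < R^2 - s^2 := by nlinarith
    rw [e1, Real.sqrt_div (le_of_lt hpos), Real.sqrt_sq hR.le]
    field_simp
  have hend : Filter.Tendsto (fun s : ℝ => Real.arcsin (s / R)) (nhdsWithin R (Iio R))
      (nhds (π/2)) := by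
    have : Real.arcsin (R / R) = π/2 := by rw [div_self hR.ne', Real.arcsin_one]
    exact this ▸ (hcont.continuousAt.continuousWithinAt)
  have hsta : Filter.Tendsto (fun s : ℝ => Real.arcsin (s / R)) (nhdsWithin a (Ioi a))
      (nhds (Real.arcsin (a/R))) := hcont.continuousAt.continuousWithinAt
  have := intervalIntegral.integral_eq_sub_of_hasDerivAt_of_tendsto haR hderiv
    (intervalIntegrable_inv_sqrt_sq_sub_sq hR ha haR.le) hsta hend
  rw [this]

set_option maxHeartbeats 1000000 in

lemma singleLayer_key (c : ℂ) (hc : ‖c‖ < 1) :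
    ∫ w in ball (0:ℂ) 1, (1/(4*π*‖c-w‖)) * (4/(π*Real.sqrt (1-‖w‖^2))) = 1 := by
  set g : ℂ → ℝ := fun w => (1/(4*π*‖c-w‖)) * (4/(π*Real.sqrt (1-‖w‖^2))) with hg
  set b : ℝ → ℝ := fun θ => c.re * Real.cos θ + c.im * Real.sin θ with hbdef
  have hcc : 0 < 1 - ‖c‖^2 := by nlinarith [norm_nonneg c]
  set R : ℝ → ℝ := fun θ => Real.sqrt (b θ^2 + (1 - ‖c‖^2)) with hRdef
  have hRsq : ∀ θ, (R θ)^2 = b θ^2 + (1-‖c‖^2) := fun θ => Real.sq_sqrt (by positivity)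
  have hbR : ∀ θ, |b θ| < R θ := by
    intro θ
    rw [hRdef, ← Real.sqrt_sq_eq_abs]
    exact Real.sqrt_lt_sqrt (sq_nonneg _) (by linarith)
  have hR0 : ∀ θ, 0 < R θ := fun θ => (abs_nonneg _).trans_lt (hbR θ)
  have hbltR : ∀ θ, b θ < R θ := fun θ => (le_abs_self _).trans_lt (hbR θ)
  have hnegR : ∀ θ, -R θ < b θ := fun θ => neg_lt_of_abs_lt (hbR θ)
  set tp : ℝ → ℝ := fun θ => R θ - b θ with htpdef
  have htp : ∀ θ, 0 < tp θ := fun θ => sub_pos.2 (hbltR θ)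
  set K : ℝ × ℝ → ℝ := fun p => Set.indicator (Ioo 0 (tp p.2))
      (fun r => (π^2)⁻¹ * (Real.sqrt ((R p.2)^2 - (r + b p.2)^2))⁻¹) p.1 with hK
  have e1 : ∫ w in ball (0:ℂ) 1, g w = ∫ w, Set.indicator (ball 0 1) g w :=
    (MeasureTheory.integral_indicator measurableSet_ball).symm
  have e2 : ∫ w, Set.indicator (ball 0 1) g w
      = ∫ v, Set.indicator (ball 0 1) g (c + v) :=
    (integral_add_left_eq_self (fun v => Set.indicator (ball 0 1) g v) c).symm
  have e3 : ∫ v, Set.indicator (ball 0 1) g (c + v)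
      = ∫ p in polarCoord.target, p.1 • Set.indicator (ball 0 1) g (c + Complex.polarCoord.symm p) :=
    (Complex.integral_comp_polarCoord_symm (fun v => Set.indicator (ball 0 1) g (c + v))).symm
  have e4 : ∫ p in polarCoord.target, p.1 • Set.indicator (ball 0 1) g (c + Complex.polarCoord.symm p)
      = ∫ p in polarCoord.target, K p := by
    apply setIntegral_congr_fun polarCoord.open_target.measurableSet
    intro p hp
    rw [polarCoord_target] at hp
    have hr : 0 < p.1 := hp.1
    set v := Complex.polarCoord.symm p with hv
    have hvre : v.re = p.1 * Real.cos p.2 := by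
      rw [hv, Complex.polarCoord_symm_apply]
      simp only [Complex.mul_re, Complex.add_re, Complex.add_im, Complex.mul_im,
        Complex.I_re, Complex.I_im, Complex.ofReal_re, Complex.ofReal_im]
      ring
    have hvim : v.im = p.1 * Real.sin p.2 := by
      rw [hv, Complex.polarCoord_symm_apply]
      simp only [Complex.mul_re, Complex.add_re, Complex.add_im, Complex.mul_im,
        Complex.I_re, Complex.I_im, Complex.ofReal_re, Complex.ofReal_im]
      ring
    have hvnorm : ‖c - (c + v)‖ = p.1 := by
      have h' : c - (c + v) = -v := by ring
      rw [h', norm_neg, hv, Complex.norm_polarCoord_symm, abs_of_pos hr]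
    have hnc : ‖c‖^2 = c.re^2 + c.im^2 := by
      rw [Complex.sq_norm, Complex.normSq_apply]; ring
    have hncv : ‖c + v‖^2 = (c.re + p.1 * Real.cos p.2)^2 + (c.im + p.1 * Real.sin p.2)^2 := by
      rw [Complex.sq_norm, Complex.normSq_apply]
      simp only [Complex.add_re, Complex.add_im, hvre, hvim]
      ring
    have hb2 : b p.2 = c.re * Real.cos p.2 + c.im * Real.sin p.2 := rfl
    have hnormsq : 1 - ‖c + v‖^2 = (R p.2)^2 - (p.1 + b p.2)^2 := by
      have hpyth := Real.sin_sq_add_cos_sq p.2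
      rw [hRsq, hncv, hnc, hb2]
      linear_combination (-(p.1^2)) * hpyth
    have hmem : (c + v ∈ ball (0 : ℂ) 1) ↔ p.1 < tp p.2 := by
      rw [mem_ball_zero_iff]
      have htp2 : tp p.2 = R p.2 - b p.2 := rfl
      constructor
      · intro h
        have h2 : 0 < (R p.2)^2 - (p.1 + b p.2)^2 := by
          rw [← hnormsq]; nlinarith [norm_nonneg (c+v)]
        have hsum : 0 < R p.2 + (p.1 + b p.2) := by linarith [hnegR p.2]
        have hdiff : 0 < R p.2 - (p.1 + b p.2) := by nlinarith [h2, hsum]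
        rw [htp2]; linarith
      · intro h
        rw [htp2] at h
        have h2 : 0 < (R p.2)^2 - (p.1 + b p.2)^2 := by
          have f1 : 0 < R p.2 - (p.1 + b p.2) := by linarith
          have f2 : 0 < R p.2 + (p.1 + b p.2) := by linarith [hnegR p.2]
          nlinarith [mul_pos f1 f2]
        rw [← hnormsq] at h2
        nlinarith [norm_nonneg (c+v)]
    show p.1 • Set.indicator (ball 0 1) g (c + v)
      = Set.indicator (Ioo 0 (tp p.2)) (fun r => (π^2)⁻¹ * (Real.sqrt ((R p.2)^2 - (r + b p.2)^2))⁻¹) p.1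
    by_cases hcase : p.1 < tp p.2
    · have hin : c + v ∈ ball (0 : ℂ) 1 := hmem.2 hcase
      rw [Set.indicator_of_mem hin, Set.indicator_of_mem (Set.mem_Ioo.2 ⟨hr, hcase⟩)]
      have hs : 0 < Real.sqrt ((R p.2)^2 - (p.1 + b p.2)^2) := by
        apply Real.sqrt_pos.2
        rw [← hnormsq]
        have h' := mem_ball_zero_iff.1 hin
        nlinarith [norm_nonneg (c+v)]
      have hgv : g (c + v) = (1/(4*π*p.1)) * (4/(π*Real.sqrt ((R p.2)^2 - (p.1 + b p.2)^2))) := by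
        rw [hg]
        simp only
        rw [hvnorm, hnormsq]
      rw [hgv, smul_eq_mul]
      have hπ := Real.pi_pos
      field_simp
    · rw [Set.indicator_of_notMem (fun h => hcase (hmem.1 h)),
        Set.indicator_of_notMem (fun h => hcase (Set.mem_Ioo.1 h).2), smul_zero]
  rw [e1, e2, e3, e4, polarCoord_target]
  -- continuity facts
  have hcontb : Continuous b := by
    rw [hbdef]; exact (continuous_const.mul Real.continuous_cos).add (continuous_const.mul Real.continuous_sin)
  have hcontR : Continuous R := by
    rw [hRdef]; exact ((hcontb.pow 2).add continuous_const).sqrt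
  have hconttp : Continuous tp := hcontR.sub hcontb
  -- interval integrability of the radial integrand
  have hIθ : ∀ θ : ℝ, IntervalIntegrable
      (fun r => (Real.sqrt ((R θ)^2 - (r + b θ)^2))⁻¹) volume 0 (tp θ) := by
    intro θ
    have h0 := (intervalIntegrable_inv_sqrt_sq_sub_sq (hR0 θ) (hnegR θ) (hbltR θ).le).comp_add_right (b θ)
    simpa using h0
  -- slice computation
  have hslice : ∀ θ : ℝ, ∫ r in Ioi (0:ℝ), K (r, θ) = (π^2)⁻¹ * (π/2 - Real.arcsin (b θ / R θ)) := by
    intro θ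
    have hKr : (fun r : ℝ => K (r, θ))
        = Set.indicator (Ioo 0 (tp θ)) (fun r => (π^2)⁻¹ * (Real.sqrt ((R θ)^2 - (r + b θ)^2))⁻¹) := rfl
    calc ∫ r in Ioi (0:ℝ), K (r, θ)
        = ∫ r in Ioo (0:ℝ) (tp θ), (π^2)⁻¹ * (Real.sqrt ((R θ)^2 - (r + b θ)^2))⁻¹ := by
          rw [show (fun r : ℝ => K (r, θ)) = _ from hKr, MeasureTheory.integral_indicator measurableSet_Ioo,
            Measure.restrict_restrict measurableSet_Ioo,
            Set.inter_eq_left.2 Set.Ioo_subset_Ioi_self]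
      _ = ∫ r in (0:ℝ)..(tp θ), (π^2)⁻¹ * (Real.sqrt ((R θ)^2 - (r + b θ)^2))⁻¹ := by
          rw [intervalIntegral.integral_of_le (htp θ).le, integral_Ioc_eq_integral_Ioo]
      _ = (π^2)⁻¹ * ∫ r in (0:ℝ)..(tp θ), (Real.sqrt ((R θ)^2 - (r + b θ)^2))⁻¹ := by
          rw [intervalIntegral.integral_const_mul]
      _ = (π^2)⁻¹ * ∫ s in (b θ)..(R θ), (Real.sqrt ((R θ)^2 - s^2))⁻¹ := by
          rw [intervalIntegral.integral_comp_add_right (fun s => (Real.sqrt ((R θ)^2 - s^2))⁻¹) (b θ),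
            zero_add, show tp θ + b θ = R θ by rw [htpdef]; ring]
      _ = (π^2)⁻¹ * (π/2 - Real.arcsin (b θ / R θ)) := by
          rw [integral_inv_sqrt_sq_sub_sq (hR0 θ) (hnegR θ) (hbltR θ)]
  have hKnn : ∀ p : ℝ × ℝ, 0 ≤ K p := by
    intro p
    apply Set.indicator_nonneg
    intro r _
    positivity
  -- measurability of K
  have hKmeas : Measurable K := by
    have hU : IsOpen {p : ℝ × ℝ | 0 < p.1 ∧ p.1 < tp p.2} := by
      exact (isOpen_lt continuous_const continuous_fst).inter
        (isOpen_lt continuous_fst (hconttp.comp continuous_snd))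
    have hKeq : K = Set.indicator {p : ℝ × ℝ | 0 < p.1 ∧ p.1 < tp p.2}
        (fun p => (π^2)⁻¹ * (Real.sqrt ((R p.2)^2 - (p.1 + b p.2)^2))⁻¹) := by
      funext p
      simp only [hK, Set.indicator_apply, Set.mem_Ioo, Set.mem_setOf_eq]
    rw [hKeq]
    refine Measurable.indicator ?_ hU.measurableSet
    refine Measurable.const_mul ?_ _
    refine Measurable.inv ?_
    exact (((hcontR.comp continuous_snd).pow 2).sub
      ((continuous_fst.add (hcontb.comp continuous_snd)).pow 2)).sqrt.measurable
  -- slice integrability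
  have hintslice : ∀ θ : ℝ, Integrable (fun r => K (r, θ)) (volume.restrict (Ioi (0:ℝ))) := by
    intro θ
    have hKr : (fun r : ℝ => K (r, θ))
        = Set.indicator (Ioo 0 (tp θ)) (fun r => (π^2)⁻¹ * (Real.sqrt ((R θ)^2 - (r + b θ)^2))⁻¹) := rfl
    rw [hKr, integrable_indicator_iff measurableSet_Ioo, IntegrableOn,
      Measure.restrict_restrict measurableSet_Ioo,
      Set.inter_eq_left.2 Set.Ioo_subset_Ioi_self]
    exact (((hIθ θ).const_mul ((π^2)⁻¹)).1.mono_set Set.Ioo_subset_Ioc_self)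
  -- integrability on the product
  have hint : Integrable K ((volume.restrict (Ioi (0:ℝ))).prod (volume.restrict (Ioo (-π) π))) := by
    refine (MeasureTheory.integrable_prod_iff' hKmeas.aestronglyMeasurable).2 ⟨?_, ?_⟩
    · exact Filter.Eventually.of_forall hintslice
    · have heq : (fun θ => ∫ r in Ioi (0:ℝ), ‖K (r, θ)‖)
          = fun θ => (π^2)⁻¹ * (π/2 - Real.arcsin (b θ / R θ)) := by
        funext θ
        rw [← hslice θ]
        congr 1
        funext r
        rw [Real.norm_eq_abs, abs_of_nonneg (hKnn _)]
      rw [heq]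
      have hcont : Continuous fun θ => (π^2)⁻¹ * (π/2 - Real.arcsin (b θ / R θ)) := by
        refine continuous_const.mul (continuous_const.sub ?_)
        exact Real.continuous_arcsin.comp (hcontb.div hcontR (fun θ => (hR0 θ).ne'))
      exact (hcont.integrableOn_Icc).mono_set Set.Ioo_subset_Icc_self
  have hfub : ∫ p in Ioi (0:ℝ) ×ˢ Ioo (-π) π, K p
      = ∫ θ in Ioo (-π) π, ∫ r in Ioi (0:ℝ), K (r, θ) := by
    rw [Measure.volume_eq_prod, ← Measure.prod_restrict]
    exact MeasureTheory.integral_prod_symm K hint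
  rw [hfub]
  rw [MeasureTheory.setIntegral_congr_fun measurableSet_Ioo (fun θ _ => hslice θ)]
  -- final angular integral
  have hππ : -π ≤ π := by linarith [Real.pi_pos]
  have hIoo : ∫ θ in Ioo (-π) π, (π^2)⁻¹ * (π/2 - Real.arcsin (b θ / R θ))
      = ∫ θ in (-π)..π, (π^2)⁻¹ * (π/2 - Real.arcsin (b θ / R θ)) := by
    rw [intervalIntegral.integral_of_le hππ, integral_Ioc_eq_integral_Ioo]
  rw [hIoo]
  set G : ℝ → ℝ := fun θ => Real.arcsin (b θ / R θ) with hGdef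
  have hGcont : Continuous G := by
    rw [hGdef]; exact Real.continuous_arcsin.comp (hcontb.div hcontR (fun θ => (hR0 θ).ne'))
  have hbper : ∀ θ, b (θ + 2*π) = b θ := by
    intro θ; rw [hbdef]; simp [Real.cos_add_two_pi, Real.sin_add_two_pi]
  have hbanti : ∀ θ, b (θ + π) = - b θ := by
    intro θ; rw [hbdef]; simp [Real.cos_add_pi, Real.sin_add_pi]; ring
  have hRper : ∀ θ, R (θ + 2*π) = R θ := by
    intro θ; rw [hRdef]; simp only; rw [hbper θ]
  have hRanti : ∀ θ, R (θ + π) = R θ := by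
    intro θ; rw [hRdef]; simp only; rw [hbanti θ]; ring_nf
  have hGper : Function.Periodic G (2*π) := by
    intro θ; rw [hGdef]; simp only; rw [hbper θ, hRper θ]
  have hGanti : ∀ θ, G (θ + π) = - G θ := by
    intro θ; rw [hGdef]; simp only; rw [hbanti θ, hRanti θ, neg_div, Real.arcsin_neg]
  have hzero : ∫ θ in (-π)..π, G θ = 0 := by
    have h1 : ∫ θ in (-π)..(-π + 2*π), G θ = ∫ θ in (0:ℝ)..(0 + 2*π), G θ :=
      hGper.intervalIntegral_add_eq (-π) 0
    have h2 : ∫ θ in (-π)..π, G (θ + π) = ∫ θ in ((-π)+π)..(π+π), G θ :=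
      intervalIntegral.integral_comp_add_right G π
    have h3 : ∫ θ in (-π)..π, G (θ + π) = - ∫ θ in (-π)..π, G θ := by
      simp only [hGanti]
      exact intervalIntegral.integral_neg
    have e5 : -π + 2*π = π := by ring
    have e6 : (-π) + π = 0 := by ring
    have e7 : π + π = 0 + 2*π := by ring
    rw [e5] at h1
    rw [e6, e7] at h2
    rw [h2, ← h1] at h3
    linarith
  have hGint : IntervalIntegrable G volume (-π) π := hGcont.intervalIntegrable _ _
  have hsplit : ∫ θ in (-π)..π, (π^2)⁻¹ * (π/2 - G θ)
      = (∫ θ in (-π)..π, (π^2)⁻¹ * (π/2)) - (π^2)⁻¹ * ∫ θ in (-π)..π, G θ := by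
    simp only [mul_sub]
    rw [intervalIntegral.integral_sub (intervalIntegrable_const)
      ((hGcont.intervalIntegrable _ _).const_mul _)]
    simp only [intervalIntegral.integral_const_mul]
  rw [hsplit, hzero, intervalIntegral.integral_const, smul_eq_mul]
  have hπ := Real.pi_pos
  field_simp
  ring


lemma planeEmb_norm (x z : EuclideanSpace ℝ (Fin 2)) : ‖planeEmb x - planeEmb z‖ = ‖x - z‖ := by
  rw [EuclideanSpace.norm_eq, EuclideanSpace.norm_eq]
  congr 1
  rw [Fin.sum_univ_three, Fin.sum_univ_two]
  simp [planeEmb, PiLp.sub_apply]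


end Aux

/-- The single layer potential (in `ℝ³`) of the equilibrium distribution
`φ(z) = 4/(π√(1-|z|²))` of the unit disk is identically `1` on the disk:
for every `x ∈ 𝔻₁`, `∫_{𝔻₁} Γ(x,z) φ(z) dz = 1`, with `Γ(x,z) = 1/(4π|x-z|)`. -/
theorem singleLayer_equilibrium_eq_one (x : EuclideanSpace ℝ (Fin 2)) (hx : ‖x‖ < 1) :
    ∫ z in ball (0 : EuclideanSpace ℝ (Fin 2)) 1,
      (1 / (4 * π * ‖planeEmb x - planeEmb z‖)) * (4 / (π * Real.sqrt (1 - ‖z‖ ^ 2))) = 1 := by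
  set B := Complex.orthonormalBasisOneI.repr with hB
  have step1 : ∫ z in ball (0 : EuclideanSpace ℝ (Fin 2)) 1,
      (1 / (4 * π * ‖planeEmb x - planeEmb z‖)) * (4 / (π * Real.sqrt (1 - ‖z‖ ^ 2)))
      = ∫ z in ball (0 : EuclideanSpace ℝ (Fin 2)) 1,
      (1 / (4 * π * ‖x - z‖)) * (4 / (π * Real.sqrt (1 - ‖z‖ ^ 2))) := by
    apply setIntegral_congr_fun measurableSet_ball
    intro z _
    simp only
    rw [planeEmb_norm]
  have hmp := Complex.orthonormalBasisOneI.measurePreserving_repr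
  have hme : MeasurableEmbedding (⇑B) := B.toHomeomorph.measurableEmbedding
  have hpre : ⇑B ⁻¹' (ball (0 : EuclideanSpace ℝ (Fin 2)) 1) = ball (0:ℂ) 1 := by
    ext w
    simp only [Set.mem_preimage, mem_ball_zero_iff, B.norm_map]
  have step2 := hmp.setIntegral_preimage_emb hme
    (fun z => (1 / (4 * π * ‖x - z‖)) * (4 / (π * Real.sqrt (1 - ‖z‖ ^ 2)))) (ball 0 1)
  rw [hpre] at step2
  have h2 : ∀ w : ℂ, ‖x - B w‖ = ‖B.symm x - w‖ := by
    intro w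
    rw [show x - B w = B (B.symm x - w) by rw [map_sub, B.apply_symm_apply], B.norm_map]
  have step3 : ∫ w in ball (0:ℂ) 1,
      (1 / (4 * π * ‖x - B w‖)) * (4 / (π * Real.sqrt (1 - ‖B w‖ ^ 2)))
      = ∫ w in ball (0:ℂ) 1,
      (1 / (4 * π * ‖B.symm x - w‖)) * (4 / (π * Real.sqrt (1 - ‖w‖ ^ 2))) := by
    apply setIntegral_congr_fun measurableSet_ball
    intro w _
    simp only
    rw [h2, B.norm_map]
  rw [step1, ← step2, step3]
  exact singleLayer_key (B.symm x) (by rw [LinearIsometryEquiv.norm_map]; exact hx)
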